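/- arXiv:2105.05363 — 2 statements merged into one kernel-verified Lean document; each statement's English description precedes it below -/
import Mathlib

section
/- Under the Gaussian linear model where the prior of x is N(μ', S) with S positive definite and the likelihood of y given x is N(Hx, Γ) with Γ positive definite, the posterior distribution of x given y is Gaussian with covariance (Hᵀ Γ^{-1} H + S^{-1})^{-1} and mean μ' + K(y − Hμ') where K = S Hᵀ (H S Hᵀ + Γ)^{-1}. -/
open Matrix
set_option maxHeartbeats 1000000

/-- Multivariate Gaussian density with mean `m` and covariance `S` on `Fin k → ℝ`. -/
noncomputable def gaussPdf {k : ℕ} (m : Fin k → ℝ) (S : Matrix (Fin k) (Fin k) ℝ)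
    (x : Fin k → ℝ) : ℝ :=
  Real.exp (-(1 / 2) * dotProduct (x - m) (S⁻¹.mulVec (x - m))) /
    Real.sqrt ((2 * Real.pi) ^ k * S.det)

private lemma quad_expand {k : ℕ} (N : Matrix (Fin k) (Fin k) ℝ) (hN : Nᵀ = N)
    (x m : Fin k → ℝ) :
    (x - m) ⬝ᵥ N *ᵥ (x - m)
      = x ⬝ᵥ N *ᵥ x - 2 * (x ⬝ᵥ N *ᵥ m) + m ⬝ᵥ N *ᵥ m := by
  have hsymm : ∀ u v : Fin k → ℝ, u ⬝ᵥ N *ᵥ v = v ⬝ᵥ N *ᵥ u := by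
    intro u v
    rw [dotProduct_mulVec, ← mulVec_transpose, hN, dotProduct_comm]
  rw [sub_dotProduct, mulVec_sub, dotProduct_sub, dotProduct_sub, hsymm m x]
  ring

/-- Gaussian conjugacy. With prior `N(μ', S)` and likelihood
`N(Hx, Γ)` for `y`, the product of the prior density and likelihood is
proportional to the Gaussian density with covariance `(HᵀΓ⁻¹H + S⁻¹)⁻¹` and mean
`μ' + K(y − Hμ')`, `K = S Hᵀ (H S Hᵀ + Γ)⁻¹`. -/
theorem stmt9 {p n : ℕ} (μ' : Fin p → ℝ) (y : Fin n → ℝ)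
    (S : Matrix (Fin p) (Fin p) ℝ) (Γ : Matrix (Fin n) (Fin n) ℝ)
    (hS : S.PosDef) (hΓ : Γ.PosDef) (H : Matrix (Fin n) (Fin p) ℝ) :
    ∃ c : ℝ, 0 < c ∧ ∀ x : Fin p → ℝ,
      gaussPdf μ' S x * gaussPdf (H.mulVec x) Γ y
        = c * gaussPdf
            (μ' + (S * Hᵀ * (H * S * Hᵀ + Γ)⁻¹).mulVec (y - H.mulVec μ'))
            ((Hᵀ * Γ⁻¹ * H + S⁻¹)⁻¹) x := by
  have hSi : S⁻¹.PosDef := hS.inv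
  have hΓi : Γ⁻¹.PosDef := hΓ.inv
  set A : Matrix (Fin p) (Fin p) ℝ := Hᵀ * Γ⁻¹ * H + S⁻¹ with hAdef
  have hHΓH : (Hᵀ * Γ⁻¹ * H).PosSemidef := by
    have := hΓi.posSemidef.conjTranspose_mul_mul_same H
    simpa [conjTranspose_eq_transpose_of_trivial] using this
  have hA : A.PosDef := Matrix.PosDef.posSemidef_add hHΓH hSi
  have hHSH : (H * S * Hᵀ).PosSemidef := by
    have := hS.posSemidef.mul_mul_conjTranspose_same H
    simpa [conjTranspose_eq_transpose_of_trivial] using this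
  have hM : (H * S * Hᵀ + Γ).PosDef := Matrix.PosDef.posSemidef_add hHSH hΓ
  have hSd : IsUnit S.det := (ne_of_gt hS.det_pos).isUnit
  have hΓd : IsUnit Γ.det := (ne_of_gt hΓ.det_pos).isUnit
  have hAd : IsUnit A.det := (ne_of_gt hA.det_pos).isUnit
  have hMd : IsUnit (H * S * Hᵀ + Γ).det := (ne_of_gt hM.det_pos).isUnit
  have hSsym : (S⁻¹)ᵀ = S⁻¹ := by
    simpa [conjTranspose_eq_transpose_of_trivial] using hSi.isHermitian.eq
  have hΓsym : (Γ⁻¹)ᵀ = Γ⁻¹ := by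
    simpa [conjTranspose_eq_transpose_of_trivial] using hΓi.isHermitian.eq
  have hAsym : Aᵀ = A := by
    simpa [conjTranspose_eq_transpose_of_trivial] using hA.isHermitian.eq
  set K : Matrix (Fin p) (Fin n) ℝ := S * Hᵀ * (H * S * Hᵀ + Γ)⁻¹ with hKdef
  have hAK : A * K = Hᵀ * Γ⁻¹ := by
    have h1 : A * (S * Hᵀ) = Hᵀ * Γ⁻¹ * (H * S * Hᵀ + Γ) := by
      rw [hAdef, Matrix.add_mul, Matrix.mul_add,
        ← Matrix.mul_assoc S⁻¹ S Hᵀ, Matrix.nonsing_inv_mul S hSd, Matrix.one_mul]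
      congr 1
      · simp [Matrix.mul_assoc]
      · rw [Matrix.mul_assoc, Matrix.nonsing_inv_mul Γ hΓd, Matrix.mul_one]
    calc A * K = A * (S * Hᵀ) * (H * S * Hᵀ + Γ)⁻¹ := by
          rw [hKdef, ← Matrix.mul_assoc]
      _ = Hᵀ * Γ⁻¹ * ((H * S * Hᵀ + Γ) * (H * S * Hᵀ + Γ)⁻¹) := by
          rw [h1, Matrix.mul_assoc]
      _ = Hᵀ * Γ⁻¹ := by rw [Matrix.mul_nonsing_inv _ hMd, Matrix.mul_one]
  set μc : Fin p → ℝ := μ' + K.mulVec (y - H.mulVec μ') with hμcdef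
  set b : Fin p → ℝ := S⁻¹ *ᵥ μ' + (Hᵀ * Γ⁻¹) *ᵥ y with hbdef
  have hmean : A *ᵥ μc = b := by
    rw [hμcdef, mulVec_add, mulVec_mulVec, hAK, mulVec_sub, hAdef, add_mulVec,
      hbdef, mulVec_mulVec, Matrix.mul_assoc]
    abel
  set r : ℝ := μ' ⬝ᵥ S⁻¹ *ᵥ μ' + y ⬝ᵥ Γ⁻¹ *ᵥ y - μc ⬝ᵥ A *ᵥ μc with hrdef
  have hquad : ∀ x : Fin p → ℝ,
      (x - μ') ⬝ᵥ S⁻¹ *ᵥ (x - μ') + (y - H *ᵥ x) ⬝ᵥ Γ⁻¹ *ᵥ (y - H *ᵥ x)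
        = (x - μc) ⬝ᵥ A *ᵥ (x - μc) + r := by
    intro x
    rw [quad_expand S⁻¹ hSsym x μ', quad_expand Γ⁻¹ hΓsym y (H *ᵥ x),
      quad_expand A hAsym x μc, hrdef]
    have key : ∀ (u : Fin p → ℝ) (w : Fin n → ℝ),
        (H *ᵥ u) ⬝ᵥ w = u ⬝ᵥ Hᵀ *ᵥ w := by
      intro u w
      rw [dotProduct_comm, dotProduct_mulVec, ← mulVec_transpose, dotProduct_comm]
    have hΓswap : ∀ u v : Fin n → ℝ, u ⬝ᵥ Γ⁻¹ *ᵥ v = v ⬝ᵥ Γ⁻¹ *ᵥ u := by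
      intro u v
      rw [dotProduct_mulVec, ← mulVec_transpose, hΓsym, dotProduct_comm]
    have e1 : (H *ᵥ x) ⬝ᵥ Γ⁻¹ *ᵥ (H *ᵥ x) = x ⬝ᵥ (Hᵀ * Γ⁻¹ * H) *ᵥ x := by
      rw [key, mulVec_mulVec, mulVec_mulVec]
    have e2 : y ⬝ᵥ Γ⁻¹ *ᵥ (H *ᵥ x) = x ⬝ᵥ (Hᵀ * Γ⁻¹) *ᵥ y := by
      rw [hΓswap, key, mulVec_mulVec]
    have e3 : x ⬝ᵥ A *ᵥ x = x ⬝ᵥ S⁻¹ *ᵥ x + x ⬝ᵥ (Hᵀ * Γ⁻¹ * H) *ᵥ x := by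
      rw [hAdef, add_mulVec, dotProduct_add]; ring
    have e4 : x ⬝ᵥ A *ᵥ μc = x ⬝ᵥ S⁻¹ *ᵥ μ' + x ⬝ᵥ (Hᵀ * Γ⁻¹) *ᵥ y := by
      rw [hmean, hbdef, dotProduct_add]
    rw [e1, e2, e3, e4]
    ring
  have h2π : (0:ℝ) < 2 * Real.pi := by positivity
  have hSdp := hS.det_pos
  have hΓdp := hΓ.det_pos
  have hNS : (0:ℝ) < Real.sqrt ((2 * Real.pi) ^ p * S.det) :=
    Real.sqrt_pos.mpr (by positivity)
  have hNΓ : (0:ℝ) < Real.sqrt ((2 * Real.pi) ^ n * Γ.det) :=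
    Real.sqrt_pos.mpr (by positivity)
  have hAinvd : (0:ℝ) < (A⁻¹).det := hA.inv.det_pos
  have hNA : (0:ℝ) < Real.sqrt ((2 * Real.pi) ^ p * (A⁻¹).det) :=
    Real.sqrt_pos.mpr (by positivity)
  refine ⟨Real.exp (-(1/2) * r) * Real.sqrt ((2 * Real.pi) ^ p * (A⁻¹).det) /
      (Real.sqrt ((2 * Real.pi) ^ p * S.det) * Real.sqrt ((2 * Real.pi) ^ n * Γ.det)),
    by positivity, ?_⟩
  intro x
  unfold gaussPdf
  rw [Matrix.nonsing_inv_nonsing_inv A hAd]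
  rw [div_mul_div_comm, ← Real.exp_add]
  have hexp : -(1/2) * ((x - μ') ⬝ᵥ S⁻¹ *ᵥ (x - μ')) +
      -(1/2) * ((y - H *ᵥ x) ⬝ᵥ Γ⁻¹ *ᵥ (y - H *ᵥ x))
      = -(1/2) * ((x - μc) ⬝ᵥ A *ᵥ (x - μc)) + -(1/2) * r := by
    linarith [hquad x]
  rw [hexp, Real.exp_add]
  have hgen : ∀ (a b c d e : ℝ), e ≠ 0 → a * b / (c * d) = b * e / (c * d) * (a / e) := by
    intro a b c d e he
    have h1 : b * e / (c * d) * (a / e) = a * b * e / (c * d * e) := by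
      rw [div_mul_div_comm]; ring
    rw [h1, mul_div_mul_right _ _ he]
  exact hgen _ _ _ _ _ (ne_of_gt hNA)
end

section
/- Let x^a_{t-1} ∈ ℝ^p, δ = (ε n /(2N)) ∇ log π(x^a_{t-1}), Q = ε I_p, R = 2V with V symmetric positive definite, H ∈ ℝ^{n×p}, K = Q Hᵀ (H Q Hᵀ + R)^{-1}, and Σ = (n/N)(I − K H). Then x^a_{t-1} + δ + K(y − H x^a_{t-1} − H δ) = x^a_{t-1} + (ε/2) Σ [ (N/n) Hᵀ V^{-1} (y − H x^a_{t-1}) + ∇ log π(x^a_{t-1}) ]. -/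
open Matrix

/-- the EnKF mean update equals a preconditioned Langevin gradient
step. Here `gl` stands for `∇ log π(x^a_{t-1})`. -/
theorem stmt10 {p n : ℕ} (ε nn NN : ℝ) (hε : 0 < ε) (hn : 0 < nn) (hN : 0 < NN)
    (V : Matrix (Fin n) (Fin n) ℝ) (hV : V.PosDef)
    (H : Matrix (Fin n) (Fin p) ℝ) (x gl : Fin p → ℝ) (y : Fin n → ℝ) :
    x + (ε * nn / (2 * NN)) • gl
      + ((ε • (1 : Matrix (Fin p) (Fin p) ℝ)) * Hᵀ
          * (H * (ε • (1 : Matrix (Fin p) (Fin p) ℝ)) * Hᵀ + (2 : ℝ) • V)⁻¹).mulVec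
        (y - H.mulVec x - H.mulVec ((ε * nn / (2 * NN)) • gl))
    = x + (ε / 2) •
        ((nn / NN) • ((1 : Matrix (Fin p) (Fin p) ℝ)
            - (ε • (1 : Matrix (Fin p) (Fin p) ℝ)) * Hᵀ
              * (H * (ε • (1 : Matrix (Fin p) (Fin p) ℝ)) * Hᵀ + (2 : ℝ) • V)⁻¹ * H)).mulVec
          ((NN / nn) • Hᵀ.mulVec (V⁻¹.mulVec (y - H.mulVec x)) + gl) := by
  set S : Matrix (Fin n) (Fin n) ℝ :=
    H * (ε • (1 : Matrix (Fin p) (Fin p) ℝ)) * Hᵀ + (2 : ℝ) • V with hSdef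
  set K : Matrix (Fin p) (Fin n) ℝ :=
    (ε • (1 : Matrix (Fin p) (Fin p) ℝ)) * Hᵀ * S⁻¹ with hKdef
  -- S is positive definite, hence invertible
  have hHHT : (H * Hᵀ).PosSemidef := by
    have := Matrix.posSemidef_self_mul_conjTranspose H
    simpa using this
  have hHQ : H * (ε • (1 : Matrix (Fin p) (Fin p) ℝ)) * Hᵀ = ε • (H * Hᵀ) := by
    simp [Matrix.mul_smul, Matrix.smul_mul]
  have h1 : (H * (ε • (1 : Matrix (Fin p) (Fin p) ℝ)) * Hᵀ).PosSemidef := by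
    rw [hHQ]
    refine ⟨?_, fun z => ?_⟩
    · simp [Matrix.IsHermitian, Matrix.conjTranspose_smul, hHHT.1.eq]
    · have hr : ∀ (a c b : ℝ), a * (ε * c) * b = ε * (a * c * b) := fun a c b => by ring
      simpa [hr, ← Finsupp.mul_sum] using mul_nonneg hε.le (hHHT.2 z)
  have h2 : ((2 : ℝ) • V).PosDef := by
    rw [two_smul]
    exact hV.add hV
  have hSpd : S.PosDef := Matrix.PosDef.posSemidef_add h1 h2
  have hdet : IsUnit S.det := (Matrix.isUnit_iff_isUnit_det S).mp hSpd.isUnit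
  have hSinv : S⁻¹ * S = 1 := Matrix.nonsing_inv_mul S hdet
  have hVdet : IsUnit V.det := (Matrix.isUnit_iff_isUnit_det V).mp hV.isUnit
  have hVinv : V * V⁻¹ = 1 := Matrix.mul_nonsing_inv V hVdet
  -- key identity: K * S = ε • Hᵀ
  have hKS : K * S = ε • Hᵀ := by
    rw [hKdef, Matrix.mul_assoc, hSinv, Matrix.mul_one, Matrix.smul_mul,
      Matrix.one_mul]
  -- derive: K = (ε/2) • ((1 - K*H) * Hᵀ * V⁻¹)
  have hexp : ε • (K * (H * Hᵀ)) + (2 : ℝ) • (K * V) = ε • Hᵀ := by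
    have h := hKS
    rw [hSdef, Matrix.mul_add, hHQ, Matrix.mul_smul, Matrix.mul_smul] at h
    rw [← h, Matrix.mul_assoc]
  have hKV : K * V = (ε / 2) • (Hᵀ - K * (H * Hᵀ)) := by
    have h2KV : (2 : ℝ) • (K * V) = ε • (Hᵀ - K * (H * Hᵀ)) := by
      rw [smul_sub, ← hexp]; abel
    rw [show K * V = (2 : ℝ)⁻¹ • ((2 : ℝ) • (K * V)) by
        rw [smul_smul, show (2:ℝ)⁻¹ * 2 = 1 by norm_num, one_smul],
      h2KV, smul_smul, show (2:ℝ)⁻¹ * ε = ε / 2 by ring]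
  have hMHt : (1 - K * H) * Hᵀ = Hᵀ - K * (H * Hᵀ) := by
    rw [Matrix.sub_mul, Matrix.one_mul, Matrix.mul_assoc]
  have hK : K = (ε / 2) • ((1 - K * H) * Hᵀ * V⁻¹) := by
    calc K = K * V * V⁻¹ := by rw [Matrix.mul_assoc, hVinv, Matrix.mul_one]
    _ = (ε / 2) • ((1 - K * H) * Hᵀ * V⁻¹) := by
        rw [hKV, Matrix.smul_mul, hMHt]
  -- the vector computation
  set u : Fin n → ℝ := y - H.mulVec x with hu
  set M : Matrix (Fin p) (Fin p) ℝ := 1 - K * H with hM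
  have key : K.mulVec u = (ε / 2) • M.mulVec (Hᵀ.mulVec (V⁻¹.mulVec u)) := by
    conv_lhs => rw [hK]
    rw [Matrix.smul_mulVec, Matrix.mulVec_mulVec, Matrix.mulVec_mulVec, hM]
  have hMgl : M.mulVec gl = gl - K.mulVec (H.mulVec gl) := by
    rw [hM, Matrix.sub_mulVec, Matrix.one_mulVec, Matrix.mulVec_mulVec]
  simp only [Matrix.mulVec_sub, Matrix.mulVec_add, Matrix.mulVec_smul,
    Matrix.smul_mulVec]
  rw [key, hMgl]
  match_scalars <;> field_simp [hn.ne', hN.ne']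
end
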